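/- Let H = (V, E) be a hypergraph, k ≥ 1, and G_k its conflict graph. For every independent set I of G_k, at least |I| edges of H are happy under the induced partial k-coloring f_I. -/

import Mathlib

open Finset

/-- Vertices of the conflict graph: triples `(e, v, c)` with `e ∈ E`, `v ∈ e`, `1 ≤ c ≤ k`. -/
abbrev ConflictVertex {V : Type*} [DecidableEq V] (E : Finset (Finset V)) (k : ℕ) :=
  {t : Finset V × V × ℕ // t.1 ∈ E ∧ t.2.1 ∈ t.1 ∧ 1 ≤ t.2.2 ∧ t.2.2 ≤ k}

/-- The conflict graph `G_k` of conflict-free `k`-coloring a hypergraph with edge set `E`. -/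
def conflictGraph {V : Type*} [DecidableEq V] (E : Finset (Finset V)) (k : ℕ) :
    SimpleGraph (ConflictVertex E k) where
  Adj x y := x ≠ y ∧
    ((x.1.2.1 = y.1.2.1 ∧ x.1.2.2 ≠ y.1.2.2) ∨ x.1.1 = y.1.1 ∨
     (x.1.2.2 = y.1.2.2 ∧
       (({x.1.2.1, y.1.2.1} : Finset V) ⊆ x.1.1 ∨ ({x.1.2.1, y.1.2.1} : Finset V) ⊆ y.1.1)))
  symm := by
    refine ⟨?_⟩
    rintro x y ⟨hne, h⟩
    refine ⟨hne.symm, ?_⟩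
    rcases h with ⟨h1, h2⟩ | h | ⟨h1, h2⟩
    · exact Or.inl ⟨h1.symm, h2.symm⟩
    · exact Or.inr (Or.inl h.symm)
    · refine Or.inr (Or.inr ⟨h1.symm, ?_⟩)
      rwa [Finset.pair_comm, or_comm] at h2
  loopless := ⟨fun x h => h.1 rfl⟩

/-- `I` is an independent set of the simple graph `G`. -/
def IsIndepSet {α : Type*} (G : SimpleGraph α) (I : Set α) : Prop :=
  I.Pairwise fun a b => ¬ G.Adj a b

/-- A partial `k`-coloring: every assigned color lies in `{1, …, k}` (`none` plays `⊥`). -/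
def IsPartialColoring {V : Type*} (f : V → Option ℕ) (k : ℕ) : Prop :=
  ∀ v c, f v = some c → 1 ≤ c ∧ c ≤ k

/-- An edge `e` is happy under the partial coloring `f`. -/
def Happy {V : Type*} (f : V → Option ℕ) (e : Finset V) : Prop :=
  ∃ v ∈ e, f v ≠ none ∧ ∀ u ∈ e, u ≠ v → f u ≠ f v

/-- For every independent set `I` of the conflict graph, at least `|I|` edges
of `H` are happy under the induced partial coloring. -/
theorem stmt7 {V : Type*} [Fintype V] [DecidableEq V]
    (E : Finset (Finset V)) (hE : ∀ e ∈ E, e.Nonempty) (k : ℕ) (hk : 1 ≤ k)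
    (I : Finset (ConflictVertex E k)) (hI : IsIndepSet (conflictGraph E k) ↑I)
    (f : V → Option ℕ)
    (hf : ∀ v c, f v = some c ↔ ∃ x ∈ I, x.1.2.1 = v ∧ x.1.2.2 = c) :
    I.card ≤ Set.ncard {e : Finset V | e ∈ E ∧ Happy f e} := by
  classical
  -- each element of I gives a happy edge
  have happy : ∀ x ∈ I, Happy f x.1.1 := by
    rintro x hx
    refine ⟨x.1.2.1, x.2.2.1, ?_, ?_⟩
    · have : f x.1.2.1 = some x.1.2.2 := (hf _ _).2 ⟨x, hx, rfl, rfl⟩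
      simp [this]
    · intro u hu hne hfu
      have hfv : f x.1.2.1 = some x.1.2.2 := (hf _ _).2 ⟨x, hx, rfl, rfl⟩
      rw [hfv] at hfu
      obtain ⟨y, hy, hyv, hyc⟩ := (hf u x.1.2.2).1 hfu
      have hxy : x ≠ y := by
        intro h; subst h; exact hne hyv.symm
      apply hI hx hy hxy
      refine (⟨hxy, Or.inr (Or.inr ⟨hyc.symm, Or.inl ?_⟩)⟩ : _ ∧ (_ ∨ _ ∨ (_ ∧ (_ ∨ _))))
      intro z hz
      simp only [Finset.mem_insert, Finset.mem_singleton] at hz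
      rcases hz with rfl | rfl
      · exact x.2.2.1
      · rw [hyv]; exact hu
  -- the edge map is injective on I
  have hinj : Set.InjOn (fun x : ConflictVertex E k => x.1.1) ↑I := by
    intro x hx y hy hxy
    by_contra hne
    exact hI hx hy hne (⟨hne, Or.inr (Or.inl hxy)⟩ : _ ∧ _)
  have hsub : (I.image fun x => x.1.1) ⊆ E.filter fun e => e ∈ E ∧ Happy f e := by
    intro e he
    obtain ⟨x, hx, rfl⟩ := Finset.mem_image.1 he
    exact Finset.mem_filter.2 ⟨x.2.1, x.2.1, happy x hx⟩
  have hset : {e : Finset V | e ∈ E ∧ Happy f e} =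
      ↑(E.filter fun e => e ∈ E ∧ Happy f e) := by
    ext e; simp [Finset.mem_filter, and_assoc]
  rw [hset, Set.ncard_coe_finset]
  calc I.card = (I.image fun x => x.1.1).card :=
        (Finset.card_image_of_injOn hinj).symm
    _ ≤ _ := Finset.card_le_card hsub
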